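/- arXiv:1210.1097 — 6 statements merged into one kernel-verified Lean document; each statement's English description precedes it below -/
import Mathlib

section
/- In any QMV algebra, the relation defined by a ≤ b iff a = a ⊓ b is a partial order (reflexive, antisymmetric, and transitive). -/
/-- A supplement algebra (S-algebra). -/
class SAlg (E : Type*) where
  add : E → E → E
  cpl : E → E
  zero : E
  one : E
  add_comm : ∀ a b : E, add a b = add b a
  add_assoc : ∀ a b c : E, add a (add b c) = add (add a b) c
  add_cpl : ∀ a : E, add a (cpl a) = one
  add_zero : ∀ a : E, add a zero = a
  cpl_cpl : ∀ a : E, cpl (cpl a) = a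
  add_one : ∀ a : E, add a one = one

namespace SAlg
variable {E : Type*} [SAlg E]
/-- a ⊙ b = (a' ⊞ b')'. -/
def odot (a b : E) : E := cpl (add (cpl a) (cpl b))
/-- a ⊓ b = (a ⊞ b') ⊙ b. -/
def scap (a b : E) : E := odot (add a (cpl b)) b
/-- a ⊔ b = (a ⊙ b') ⊞ b. -/
def scup (a b : E) : E := add (odot a (cpl b)) b
/-- The QMV order: a ≤ b iff a = a ⊓ b. -/
def sle (a b : E) : Prop := a = scap a b
end SAlg
/-- A quantum MV (QMV) algebra. -/
class QMV (E : Type*) extends SAlg E where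
  qmv1 : ∀ a b : E, SAlg.scup a (SAlg.scap b a) = a
  qmv2 : ∀ a b c : E,
    SAlg.scap (SAlg.scap a b) c = SAlg.scap (SAlg.scap a b) (SAlg.scap b c)
  qmv3 : ∀ a b c : E,
    add a (SAlg.scap b (cpl (add a c)))
      = SAlg.scap (add a b) (add a (cpl (add a c)))
  qmv4 : ∀ a b : E, add a (SAlg.scap (cpl a) b) = add a b
  qmv5 : ∀ a b : E, SAlg.scup (add (cpl a) b) (add (cpl b) a) = one

namespace SAlg
variable {E : Type*} [SAlg E]

lemma cpl_zero : cpl (zero : E) = one := by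
  have h := add_cpl (zero : E)
  rw [add_comm, add_zero] at h
  exact h

lemma cpl_one : cpl (one : E) = zero := by
  rw [← cpl_zero, cpl_cpl]

lemma zero_add (a : E) : add zero a = a := by rw [add_comm, add_zero]

lemma cpl_inj {a b : E} (h : cpl a = cpl b) : a = b := by
  rw [← cpl_cpl a, h, cpl_cpl]

/-- a ⊓ a = a (reflexivity core). -/
lemma scap_self (a : E) : scap a a = a := by
  rw [scap, add_cpl, odot, cpl_one, zero_add, cpl_cpl]

/-- If a ≤ b then a' = (a⊞b')' ⊞ b'. -/
lemma cpl_eq_of_sle {a b : E} (h : sle a b) :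
    cpl a = add (cpl (add a (cpl b))) (cpl b) := by
  rw [sle, scap, odot] at h
  calc cpl a = cpl (cpl (add (cpl (add a (cpl b))) (cpl b))) := by rw [← h]
    _ = add (cpl (add a (cpl b))) (cpl b) := cpl_cpl _

/-- If a ≤ b then a' ⊞ b = 1. -/
lemma cpl_add_eq_one_of_sle {a b : E} (h : sle a b) :
    add (cpl a) b = one := by
  rw [cpl_eq_of_sle h, ← add_assoc, add_comm (cpl b) b, add_cpl, add_one]

/-- If a ≤ b then a ⊙ b' = 0. -/
lemma odot_cpl_eq_zero_of_sle {a b : E} (h : sle a b) :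
    odot a (cpl b) = zero := by
  rw [odot, cpl_cpl, cpl_add_eq_one_of_sle h, cpl_one]

end SAlg

/-- In any QMV algebra, the relation a ≤ b iff a = a ⊓ b is a partial order. -/
theorem qmv_sle_partial_order {E : Type*} [QMV E] :
    (∀ a : E, SAlg.sle a a) ∧
    (∀ a b : E, SAlg.sle a b → SAlg.sle b a → a = b) ∧
    (∀ a b c : E, SAlg.sle a b → SAlg.sle b c → SAlg.sle a c) := by
  refine ⟨fun a => ?_, fun a b hab hba => ?_, fun a b c hab hbc => ?_⟩
  · exact (SAlg.scap_self a).symm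
  · -- antisymmetry
    -- From b ≤ a and qmv1: a ⊔ b = a
    have h1 : SAlg.scup a b = a := by
      have := QMV.qmv1 a b
      rwa [← hba] at this
    -- From a ≤ b: a ⊙ b' = 0, so a ⊔ b = b
    have h2 : SAlg.scup a b = b := by
      rw [SAlg.scup, SAlg.odot_cpl_eq_zero_of_sle hab, SAlg.zero_add]
    rw [← h1, h2]
  · -- transitivity via qmv2
    have h := QMV.qmv2 a b c
    rw [← hab, ← hbc, ← hab] at h
    exact h.symm
end

section
/- In any lattice-ordered QMV algebra, ⊞ is monotone in each argument: if a ≤ b then a ⊞ c ≤ b ⊞ c for all c. -/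
namespace QMVAux

open SAlg

variable {E : Type*} [QMV E]

lemma zero_cpl : (SAlg.cpl (SAlg.zero : E)) = SAlg.one := by
  have h := SAlg.add_cpl (SAlg.zero : E)
  rw [SAlg.add_comm, SAlg.add_zero] at h
  exact h

lemma one_cpl : (SAlg.cpl (SAlg.one : E)) = SAlg.zero := by
  rw [← zero_cpl, SAlg.cpl_cpl]

lemma scap_one (a : E) : SAlg.scap a SAlg.one = a := by
  simp only [SAlg.scap, SAlg.odot, one_cpl, SAlg.add_zero, SAlg.cpl_cpl]

/-- E1 : c ⊞ (y ⊓ c') = c ⊞ y, from QMV3 with z := 0. -/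
lemma add_scap_cpl (c y : E) :
    SAlg.add c (SAlg.scap y (SAlg.cpl c)) = SAlg.add c y := by
  have h := QMV.qmv3 c y (SAlg.zero : E)
  rw [SAlg.add_zero] at h
  rw [h, SAlg.add_cpl, scap_one]

/-- (c ⊞ (b ⊞ c)')' = b ⊓ c'. -/
lemma cpl_add_eq_scap (b c : E) :
    SAlg.cpl (SAlg.add c (SAlg.cpl (SAlg.add b c))) = SAlg.scap b (SAlg.cpl c) := by
  simp only [SAlg.scap, SAlg.odot, SAlg.cpl_cpl]
  rw [SAlg.add_comm c]

end QMVAux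

/-- In any lattice-ordered QMV algebra, ⊞ is monotone in each argument. -/
theorem qmv_add_monotone {E : Type*} [QMV E] [Lattice E]
    (hord : ∀ a b : E, a ≤ b ↔ SAlg.sle a b) :
    ∀ a b c : E, a ≤ b → SAlg.add a c ≤ SAlg.add b c := by
  intro a b c hab
  have hab' : a = SAlg.scap a b := (hord a b).1 hab
  -- QMV3 with (x, y, z) := (c, a, (b ⊞ c)')
  have key := QMV.qmv3 c a (SAlg.cpl (SAlg.add b c))
  rw [QMVAux.cpl_add_eq_scap b c] at key
  -- G3 : a ⊓ (b ⊓ c') = a ⊓ c', from QMV2 and a = a ⊓ b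
  have g3 : SAlg.scap a (SAlg.scap b (SAlg.cpl c)) = SAlg.scap a (SAlg.cpl c) := by
    have h := QMV.qmv2 a b (SAlg.cpl c)
    rw [← hab'] at h
    exact h.symm
  rw [g3, QMVAux.add_scap_cpl c a, QMVAux.add_scap_cpl c b] at key
  have : SAlg.sle (SAlg.add c a) (SAlg.add c b) := key
  have h := (hord _ _).2 this
  rwa [SAlg.add_comm c a, SAlg.add_comm c b] at h
end

section
/- A lattice-ordered QMV algebra E is an MV algebra if and only if (a ⊞ b) ∧ (a ⊞ c) = a ⊞ (b ∧ c) for all a, b, c in E. -/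
namespace QMVProof

variable {E : Type*} [SAlg E]

lemma cpl0 : (SAlg.cpl (SAlg.zero : E)) = SAlg.one := by
  have h1 := SAlg.add_cpl (SAlg.zero : E)
  rw [SAlg.add_comm, SAlg.add_zero] at h1
  exact h1

lemma cpl1 : (SAlg.cpl (SAlg.one : E)) = SAlg.zero := by
  rw [← cpl0, SAlg.cpl_cpl]

lemma sle_top (a : E) : SAlg.sle a SAlg.one := by
  unfold SAlg.sle SAlg.scap SAlg.odot
  rw [cpl1, SAlg.add_zero, SAlg.add_zero, SAlg.cpl_cpl]

/-- Under Łukasiewicz (scup commutativity), the QMV order is `a' ⊞ b = 1`. -/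
lemma le_iff (h : ∀ a b : E, SAlg.scup a b = SAlg.scup b a) (a b : E) :
    SAlg.sle a b ↔ SAlg.add (SAlg.cpl a) b = SAlg.one := by
  constructor
  · intro hab
    have hca : SAlg.cpl a
        = SAlg.add (SAlg.cpl (SAlg.add a (SAlg.cpl b))) (SAlg.cpl b) := by
      conv_lhs => rw [hab]
      unfold SAlg.scap SAlg.odot
      rw [SAlg.cpl_cpl]
    rw [hca, ← SAlg.add_assoc, SAlg.add_comm (SAlg.cpl b) b, SAlg.add_cpl,
      SAlg.add_one]
  · intro h1
    unfold SAlg.sle SAlg.scap SAlg.odot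
    have h2 := h (SAlg.cpl a) (SAlg.cpl b)
    unfold SAlg.scup SAlg.odot at h2
    simp only [SAlg.cpl_cpl] at h2
    rw [h2, SAlg.add_comm b (SAlg.cpl a), h1, cpl1,
      SAlg.add_comm SAlg.zero (SAlg.cpl a), SAlg.add_zero, SAlg.cpl_cpl]

/-- Monotonicity of ⊞ under Łukasiewicz. -/
lemma mono (h : ∀ a b : E, SAlg.scup a b = SAlg.scup b a) {a b : E}
    (h1 : SAlg.add (SAlg.cpl a) b = SAlg.one) (c : E) :
    SAlg.add (SAlg.cpl (SAlg.add c a)) (SAlg.add c b) = SAlg.one := by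
  have h2 := h b a
  unfold SAlg.scup SAlg.odot at h2
  simp only [SAlg.cpl_cpl] at h2
  -- h2 : add (cpl (add (cpl b) a)) a = add (cpl (add (cpl a) b)) b
  rw [h1, cpl1, SAlg.add_comm SAlg.zero b, SAlg.add_zero] at h2
  -- h2 : add (cpl (add (cpl b) a)) a = b
  have hd : SAlg.add a (SAlg.cpl (SAlg.add (SAlg.cpl b) a)) = b := by
    rw [SAlg.add_comm]; exact h2
  rw [← hd, SAlg.add_assoc c a (SAlg.cpl (SAlg.add (SAlg.cpl b) a)),
    SAlg.add_assoc, SAlg.add_comm (SAlg.cpl (SAlg.add c a)) (SAlg.add c a),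
    SAlg.add_cpl, SAlg.add_comm, SAlg.add_one]

/-- `d ≤ a ⊞ (d ⊙ a')` under Łukasiewicz. -/
lemma self_le (h : ∀ a b : E, SAlg.scup a b = SAlg.scup b a) (a d : E) :
    SAlg.add (SAlg.cpl d) (SAlg.add a (SAlg.odot d (SAlg.cpl a)))
      = SAlg.one := by
  have h2 := h d a
  unfold SAlg.scup at h2
  -- h2 : add (odot d (cpl a)) a = add (odot a (cpl d)) d
  rw [SAlg.add_comm a (SAlg.odot d (SAlg.cpl a)), h2,
    SAlg.add_comm (SAlg.odot a (SAlg.cpl d)) d, SAlg.add_assoc,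
    SAlg.add_comm (SAlg.cpl d) d, SAlg.add_cpl, SAlg.add_comm, SAlg.add_one]

end QMVProof

/-- A lattice-ordered QMV algebra is an MV algebra iff
(a ⊞ b) ∧ (a ⊞ c) = a ⊞ (b ∧ c) for all a, b, c. -/
theorem qmv_mv_iff_distrib {E : Type*} [QMV E] [Lattice E]
    (hord : ∀ a b : E, a ≤ b ↔ SAlg.sle a b) :
    (∀ a b : E, SAlg.add (SAlg.cpl (SAlg.add (SAlg.cpl a) b)) b
        = SAlg.add (SAlg.cpl (SAlg.add a (SAlg.cpl b))) a)
    ↔ (∀ a b c : E, SAlg.add a b ⊓ SAlg.add a c = SAlg.add a (b ⊓ c)) := by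
  constructor
  · intro h
    have hs : ∀ a b : E, SAlg.scup a b = SAlg.scup b a := by
      intro a b
      unfold SAlg.scup SAlg.odot
      simp only [SAlg.cpl_cpl]
      rw [SAlg.add_comm (SAlg.cpl b) a]
      exact h a b
    have key : ∀ x y : E, x ≤ y ↔ SAlg.add (SAlg.cpl x) y = SAlg.one :=
      fun x y => (hord x y).trans (QMVProof.le_iff hs x y)
    intro a b c
    apply le_antisymm
    · set d := SAlg.add a b ⊓ SAlg.add a c with hdd
      have h1 : SAlg.add (SAlg.cpl d) (SAlg.add a b) = SAlg.one :=
        (key d (SAlg.add a b)).mp inf_le_left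
      have h2 : SAlg.add (SAlg.cpl d) (SAlg.add a c) = SAlg.one :=
        (key d (SAlg.add a c)).mp inf_le_right
      have hres : ∀ x : E,
          SAlg.add (SAlg.cpl (SAlg.odot d (SAlg.cpl a))) x
            = SAlg.add (SAlg.cpl d) (SAlg.add a x) := by
        intro x
        unfold SAlg.odot
        simp only [SAlg.cpl_cpl]
        rw [SAlg.add_assoc]
      have hb : SAlg.odot d (SAlg.cpl a) ≤ b :=
        (key _ _).mpr (by rw [hres b]; exact h1)
      have hc : SAlg.odot d (SAlg.cpl a) ≤ c :=
        (key _ _).mpr (by rw [hres c]; exact h2)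
      have hbc := (key _ _).mp (le_inf hb hc)
      have h3 := QMVProof.mono hs hbc a
      have h4 : d ≤ SAlg.add a (SAlg.odot d (SAlg.cpl a)) :=
        (key _ _).mpr (QMVProof.self_le hs a d)
      exact le_trans h4 ((key _ _).mpr h3)
    · apply le_inf
      · exact (key _ _).mpr
          (QMVProof.mono hs ((key (b ⊓ c) b).mp inf_le_left) a)
      · exact (key _ _).mpr
          (QMVProof.mono hs ((key (b ⊓ c) c).mp inf_le_right) a)
  · intro hd a b
    have hscap : ∀ x y : E, x ⊓ y = SAlg.scap x y := by
      intro x y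
      have h1 : SAlg.sle (x ⊓ y) y := (hord _ _).mp inf_le_right
      have h3 := hd (SAlg.cpl y) x y
      rw [SAlg.add_comm (SAlg.cpl y) y, SAlg.add_cpl] at h3
      rw [inf_eq_left.mpr ((hord _ _).mpr (QMVProof.sle_top _))] at h3
      -- h3 : add (cpl y) x = add (cpl y) (x ⊓ y)
      calc x ⊓ y = SAlg.scap (x ⊓ y) y := h1
        _ = SAlg.scap x y := by
            unfold SAlg.scap
            rw [SAlg.add_comm (x ⊓ y) (SAlg.cpl y), ← h3,
              SAlg.add_comm (SAlg.cpl y) x]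
    have h5 : SAlg.scap (SAlg.cpl a) (SAlg.cpl b)
        = SAlg.scap (SAlg.cpl b) (SAlg.cpl a) := by
      rw [← hscap, ← hscap, inf_comm]
    have h6 := congrArg SAlg.cpl h5
    unfold SAlg.scap SAlg.odot at h6
    simp only [SAlg.cpl_cpl] at h6
    -- h6 : add (cpl (add (cpl a) b)) b = add (cpl (add (cpl b) a)) a
    rw [h6, SAlg.add_comm (SAlg.cpl b) a]
end

section
/- An extended lattice-ordered effect algebra E is a linear MV algebra (i.e., an MV algebra whose order is total) if and only if (a ⊞ b) ∧ (a ⊞ c) = a ⊞ (b ∧ c) for all a, b, c in E. -/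
/-- An effect algebra, with a partial sum modelled via `Option`. -/
class EffectAlg (P : Type*) where
  zero : P
  one : P
  padd : P → P → Option P
  zero_ne_one : zero ≠ one
  /-- (E1) commutativity. -/
  padd_comm : ∀ a b : P, padd a b = padd b a
  /-- (E2) associativity where defined. -/
  padd_assoc : ∀ a b c bc s : P, padd b c = some bc → padd a bc = some s →
    ∃ ab : P, padd a b = some ab ∧ padd ab c = some s
  /-- (E3) orthosupplement. -/
  cpl : P → P
  padd_cpl : ∀ a : P, padd a (cpl a) = some one
  cpl_unique : ∀ a b : P, padd a b = some one → b = cpl a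
  /-- (E4) zero-one law. -/
  one_law : ∀ a b : P, padd one a = some b → a = zero

namespace EffectAlg
variable {P : Type*} [EffectAlg P]
/-- The totalized sum: a ⊞ b = a ⊕ b if defined, 1 otherwise. -/
def bplus (a b : P) : P := (padd a b).getD one
/-- a ⊙ b = (a' ⊞ b')'. -/
def odot (a b : P) : P := cpl (bplus (cpl a) (cpl b))
/-- a ⊓ b = (a ⊞ b') ⊙ b. -/
def scap (a b : P) : P := odot (bplus a (cpl b)) b
end EffectAlg


namespace EffectAlgAux
open EffectAlg
variable {P : Type*} [EffectAlg P]

lemma padd_cpl' (a : P) : padd (cpl a) a = some one := by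
  rw [padd_comm]; exact padd_cpl a

lemma cpl_cpl (a : P) : cpl (cpl a) = a :=
  (cpl_unique (cpl a) a (padd_cpl' a)).symm

lemma cpl_one : cpl (one : P) = zero :=
  one_law (cpl one) one (padd_cpl one)

lemma zero_padd (a : P) : padd (zero : P) a = some a := by
  have h2 : padd (zero : P) one = some one := by
    rw [show (zero : P) = cpl one from cpl_one.symm, padd_comm]
    exact padd_cpl one
  obtain ⟨t, ht, ht2⟩ := padd_assoc zero a (cpl a) one one (padd_cpl a) h2
  have hta : t = a := by
    have := cpl_unique (cpl a) t (by rw [padd_comm]; exact ht2)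
    rw [this, cpl_cpl]
  rwa [hta] at ht

lemma padd_zero (a : P) : padd a (zero : P) = some a := by
  rw [padd_comm]; exact zero_padd a

lemma padd_cancel {a b c d : P} (h1 : padd a b = some c) (h2 : padd a d = some c) :
    b = d := by
  obtain ⟨e, he, he2⟩ := padd_assoc (cpl c) a b c one h1 (padd_cpl' c)
  obtain ⟨e', he', he2'⟩ := padd_assoc (cpl c) a d c one h2 (padd_cpl' c)
  have hee : e = e' := by
    rw [he] at he'; exact Option.some.inj he'
  rw [cpl_unique e b he2, cpl_unique e' d he2', hee]

section Ord
variable [Lattice P]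

lemma le_of_padd (hord : ∀ a b : P, a ≤ b ↔ ∃ c : P, padd a c = some b) {a b c : P} (h : padd a c = some b) : a ≤ b :=
  (hord a b).mpr ⟨c, h⟩

lemma le_one (hord : ∀ a b : P, a ≤ b ↔ ∃ c : P, padd a c = some b) (a : P) : a ≤ one :=
  (hord a one).mpr ⟨cpl a, padd_cpl a⟩

lemma defined_le (hord : ∀ a b : P, a ≤ b ↔ ∃ c : P, padd a c = some b) {a b s : P} (h : padd a b = some s) : a ≤ cpl b := by
  obtain ⟨e, he, he2⟩ := padd_assoc (cpl s) a b s one h (padd_cpl' s)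
  have heb : e = cpl b := cpl_unique b e (by rw [padd_comm]; exact he2)
  refine le_of_padd hord (c := cpl s) ?_
  rw [padd_comm]; rw [heb] at he; exact he

lemma le_defined (hord : ∀ a b : P, a ≤ b ↔ ∃ c : P, padd a c = some b) {a b : P} (h : a ≤ cpl b) : ∃ s, padd a b = some s := by
  obtain ⟨c, hc⟩ := (hord a (cpl b)).mp h
  obtain ⟨e, he, _⟩ := padd_assoc b a c (cpl b) one hc (padd_cpl b)
  exact ⟨e, by rw [padd_comm]; exact he⟩

lemma cpl_le_cpl (hord : ∀ a b : P, a ≤ b ↔ ∃ c : P, padd a c = some b) {a b : P} (h : a ≤ b) : cpl b ≤ cpl a := by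
  obtain ⟨s, hs⟩ := le_defined hord (a := a) (b := cpl b) (by rwa [cpl_cpl])
  exact defined_le hord (by rw [padd_comm]; exact hs)

lemma padd_mono (hord : ∀ a b : P, a ≤ b ↔ ∃ c : P, padd a c = some b) {a b c s : P} (hbc : b ≤ c) (h : padd a c = some s) :
    ∃ t, padd a b = some t ∧ t ≤ s := by
  obtain ⟨e, he⟩ := (hord b c).mp hbc
  obtain ⟨t, ht, ht2⟩ := padd_assoc a b e c s he h
  exact ⟨t, ht, le_of_padd hord ht2⟩

end Ord

lemma bplus_of_some {a b s : P} (h : padd a b = some s) : bplus a b = s := by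
  rw [bplus, h]; rfl

lemma bplus_of_none {a b : P} (h : padd a b = none) : bplus a b = one := by
  rw [bplus, h]; rfl

lemma bplus_comm (a b : P) : bplus a b = bplus b a := by
  rw [bplus, bplus, padd_comm]

section Ord2
variable [Lattice P]

lemma bplus_mono (hord : ∀ a b : P, a ≤ b ↔ ∃ c : P, padd a c = some b) {a b c : P} (hbc : b ≤ c) : bplus a b ≤ bplus a c := by
  cases hc : padd a c with
  | none => rw [bplus_of_none hc]; exact le_one hord _
  | some s =>
    obtain ⟨t, ht, hts⟩ := padd_mono hord hbc hc
    rw [bplus_of_some ht, bplus_of_some hc]; exact hts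

lemma mv_of_le (hord : ∀ a b : P, a ≤ b ↔ ∃ c : P, padd a c = some b) {a b : P} (h : a ≤ b) :
    bplus (cpl (bplus (cpl a) b)) b = bplus (cpl (bplus a (cpl b))) a := by
  by_cases hba : b ≤ a
  · have hab : a = b := le_antisymm h hba
    subst hab
    rw [bplus_of_some (padd_cpl' a), bplus_of_some (padd_cpl a)]
  · have hnone : padd (cpl a) b = none := by
      cases hh : padd (cpl a) b with
      | none => rfl
      | some s =>
        exfalso; apply hba
        have h1 : cpl a ≤ cpl b := by
          have := defined_le hord hh; rwa [] at this
        have h2 := cpl_le_cpl hord h1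
        rwa [cpl_cpl, cpl_cpl] at h2
    obtain ⟨s, hs⟩ := le_defined hord (a := a) (b := cpl b) (by rwa [cpl_cpl])
    obtain ⟨e, he, he2⟩ := padd_assoc (cpl s) a (cpl b) s one hs (padd_cpl' s)
    have heb : e = b := by
      have := cpl_unique (cpl b) e (by rw [padd_comm]; exact he2)
      rw [this, cpl_cpl]
    rw [heb] at he2
    -- he : padd (cpl s) a = some b? no: padd (cpl s) a = some e, with e = b
    rw [heb] at he
    rw [bplus_of_none hnone, cpl_one, bplus_of_some (zero_padd b),
      bplus_of_some hs, bplus_of_some he]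

end Ord2
end EffectAlgAux

/-- An extended lattice-ordered effect algebra is a linear MV algebra iff
(a ⊞ b) ∧ (a ⊞ c) = a ⊞ (b ∧ c) for all a, b, c. -/
theorem extended_effect_linear_mv_iff_distrib {P : Type*} [EffectAlg P] [Lattice P]
    (hord : ∀ a b : P, a ≤ b ↔ ∃ c : P, EffectAlg.padd a c = some b) :
    ((∀ a b : P,
        EffectAlg.bplus (EffectAlg.cpl (EffectAlg.bplus (EffectAlg.cpl a) b)) b
          = EffectAlg.bplus (EffectAlg.cpl (EffectAlg.bplus a (EffectAlg.cpl b))) a) ∧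
      (∀ a b : P, a ≤ b ∨ b ≤ a))
    ↔ (∀ a b c : P,
        EffectAlg.bplus a b ⊓ EffectAlg.bplus a c = EffectAlg.bplus a (b ⊓ c)) := by
  open EffectAlg EffectAlgAux in
  constructor
  · rintro ⟨-, htot⟩ a b c
    rcases htot b c with h | h
    · rw [inf_eq_left.mpr h]
      exact inf_eq_left.mpr (bplus_mono hord h)
    · rw [inf_eq_right.mpr h]
      exact inf_eq_right.mpr (bplus_mono hord h)
  · intro hdist
    have htot : ∀ a b : P, a ≤ b ∨ b ≤ a := by
      intro a b
      obtain ⟨x, hx⟩ := (hord (a ⊓ b) a).mp inf_le_left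
      obtain ⟨y, hy⟩ := (hord (a ⊓ b) b).mp inf_le_right
      obtain ⟨t, ht, hta⟩ := padd_mono hord (inf_le_left : x ⊓ y ≤ x) hx
      obtain ⟨t', ht', htb⟩ := padd_mono hord (inf_le_right : x ⊓ y ≤ y) hy
      have htt : t = t' := by rw [ht] at ht'; exact Option.some.inj ht'
      have ht0 : t = a ⊓ b :=
        le_antisymm (le_inf hta (htt ▸ htb)) (le_of_padd hord ht)
      have hxy0 : x ⊓ y = EffectAlg.zero := by
        refine padd_cancel (ht0 ▸ ht) (padd_zero _)
      have hd := hdist (EffectAlg.cpl x) x y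
      rw [hxy0, bplus_of_some (padd_cpl' x), bplus_of_some (padd_zero _)] at hd
      have hB : bplus (EffectAlg.cpl x) y = EffectAlg.cpl x := by
        rw [inf_eq_right.mpr (le_one hord _)] at hd
        exact hd
      cases hc : EffectAlg.padd (EffectAlg.cpl x) y with
      | none =>
        have hx1 : EffectAlg.cpl x = EffectAlg.one := by
          rw [← hB, bplus_of_none hc]
        have hx0 : x = EffectAlg.zero := by
          rw [← cpl_cpl x, hx1, cpl_one]
        left
        have hab : a ⊓ b = a := by
          rw [hx0, padd_zero] at hx
          exact Option.some.inj hx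
        exact hab ▸ inf_le_right
      | some s =>
        have hs : s = EffectAlg.cpl x := by rw [bplus_of_some hc] at hB; exact hB
        have hy0 : y = EffectAlg.zero := padd_cancel (hs ▸ hc) (padd_zero _)
        right
        have hab : a ⊓ b = b := by
          rw [hy0, padd_zero] at hy
          exact Option.some.inj hy
        exact hab ▸ inf_le_left
    refine ⟨?_, htot⟩
    intro a b
    rcases htot a b with h | h
    · exact mv_of_le hord h
    · have := (mv_of_le hord h).symm
      rwa [bplus_comm b (EffectAlg.cpl a), bplus_comm (EffectAlg.cpl b) a] at this
end

section
/- For any effect algebra (P, ⊕, 0, 1), the total operation ⊞ defined by a ⊞ b = a ⊕ b when a ⊕ b is defined and a ⊞ b = 1 otherwise makes (P, ⊞, ', 0, 1) into an S-algebra; that is, ⊞ is commutative and associative, a ⊞ a' = 1, a ⊞ 0 = a, a'' = a, and a ⊞ 1 = 1. -/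
namespace EffectAlg
variable {P : Type*} [EffectAlg P]

lemma cpl_cpl (a : P) : cpl (cpl a) = a :=
  (cpl_unique (cpl a) a (by rw [padd_comm]; exact padd_cpl a)).symm

lemma cpl_one : (cpl one : P) = zero :=
  one_law (cpl one) one (padd_cpl one)

lemma cpl_zero : cpl (zero : P) = one := by
  rw [← cpl_one, cpl_cpl]

lemma padd_zero (a : P) : padd a zero = some a := by
  have h1 : padd a (cpl a) = some one := padd_cpl a
  have h2 : padd (zero : P) one = some one := by
    have := padd_cpl (zero : P); rwa [cpl_zero] at this
  obtain ⟨ab, hab, hab1⟩ := padd_assoc zero a (cpl a) one one h1 h2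
  have : cpl a = cpl ab := cpl_unique ab (cpl a) hab1
  have hab_eq : ab = a := by
    rw [← cpl_cpl ab, ← this, cpl_cpl]
  rw [padd_comm]
  rw [hab_eq] at hab
  exact hab

lemma bplus_one (a : P) : bplus a one = one := by
  unfold bplus
  cases h : padd a one with
  | none => rfl
  | some b =>
    have : a = zero := one_law a b (by rw [padd_comm]; exact h)
    subst this
    rw [padd_comm, padd_zero] at h
    simpa using h.symm

lemma one_bplus (a : P) : bplus one a = one := by
  unfold bplus; rw [padd_comm]; exact bplus_one a

-- reverse direction of associativity
lemma padd_assoc' (a b c ab s : P) (h1 : padd a b = some ab)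
    (h2 : padd ab c = some s) :
    ∃ bc : P, padd b c = some bc ∧ padd a bc = some s := by
  obtain ⟨cb, hcb, hcba⟩ := padd_assoc c b a ab s (by rw [padd_comm]; exact h1)
    (by rw [padd_comm]; exact h2)
  exact ⟨cb, by rw [padd_comm]; exact hcb, by rw [padd_comm]; exact hcba⟩

lemma bplus_assoc (a b c : P) :
    bplus a (bplus b c) = bplus (bplus a b) c := by
  cases hbc : padd b c with
  | none =>
    have hL : bplus a (bplus b c) = one := by
      unfold bplus; rw [hbc]; exact bplus_one a
    rw [hL]
    cases hab : padd a b with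
    | none =>
      have : bplus a b = one := by unfold bplus; rw [hab]; rfl
      rw [this, one_bplus]
    | some ab =>
      have : bplus a b = ab := by unfold bplus; rw [hab]; rfl
      rw [this]
      cases habc : padd ab c with
      | none => unfold bplus; rw [habc]; rfl
      | some s =>
        obtain ⟨bc, hbc', _⟩ := padd_assoc' a b c ab s hab habc
        rw [hbc] at hbc'; exact absurd hbc' (by simp)
  | some bc =>
    have hBC : bplus b c = bc := by unfold bplus; rw [hbc]; rfl
    rw [hBC]
    cases habc : padd a bc with
    | some s =>
      obtain ⟨ab, hab, habc'⟩ := padd_assoc a b c bc s hbc habc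
      have : bplus a b = ab := by unfold bplus; rw [hab]; rfl
      rw [this]
      unfold bplus; rw [habc, habc']
    | none =>
      have hL : bplus a bc = one := by unfold bplus; rw [habc]; rfl
      rw [hL]
      cases hab : padd a b with
      | none =>
        have : bplus a b = one := by unfold bplus; rw [hab]; rfl
        rw [this, one_bplus]
      | some ab =>
        have hAB : bplus a b = ab := by unfold bplus; rw [hab]; rfl
        rw [hAB]
        cases habc2 : padd ab c with
        | none => unfold bplus; rw [habc2]; rfl
        | some s =>
          obtain ⟨bc', hbc', habc''⟩ := padd_assoc' a b c ab s hab habc2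
          rw [hbc] at hbc'
          have : bc' = bc := by injection hbc'.symm
          rw [this] at habc''
          rw [habc''] at habc
          exact absurd habc (by simp)

end EffectAlg

/-- Totalizing the partial sum of an effect algebra yields an S-algebra. -/
theorem extended_effect_is_salg {P : Type*} [EffectAlg P] :
    (∀ a b : P, EffectAlg.bplus a b = EffectAlg.bplus b a) ∧
    (∀ a b c : P, EffectAlg.bplus a (EffectAlg.bplus b c)
        = EffectAlg.bplus (EffectAlg.bplus a b) c) ∧
    (∀ a : P, EffectAlg.bplus a (EffectAlg.cpl a) = EffectAlg.one) ∧
    (∀ a : P, EffectAlg.bplus a EffectAlg.zero = a) ∧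
    (∀ a : P, EffectAlg.cpl (EffectAlg.cpl a) = a) ∧
    (∀ a : P, EffectAlg.bplus a EffectAlg.one = EffectAlg.one) := by
  refine ⟨?_, ?_, ?_, ?_, ?_, ?_⟩
  · intro a b; unfold EffectAlg.bplus; rw [EffectAlg.padd_comm]
  · intro a b c; exact EffectAlg.bplus_assoc a b c
  · intro a; unfold EffectAlg.bplus; rw [EffectAlg.padd_cpl]; rfl
  · intro a; unfold EffectAlg.bplus; rw [EffectAlg.padd_zero]; rfl
  · intro a; exact EffectAlg.cpl_cpl a
  · intro a; exact EffectAlg.bplus_one a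
end

section
/- Let E be a locally finite QMV algebra and let R ⊆ E be a finite subset. Then the set R^⊞ = {a_1 ⊞ a_2 ⊞ ⋯ ⊞ a_n : a_i ∈ R, n ∈ ℕ} ∪ {0} is finite. -/
/-- n·a = a ⊞ a ⊞ ⋯ ⊞ a (n times). -/
def nadd {E : Type*} [SAlg E] (n : ℕ) (a : E) : E :=
  match n with
  | 0 => SAlg.zero
  | n + 1 => SAlg.add a (nadd n a)

section Aux
variable {E : Type*} [SAlg E]

lemma SAlg.add_lcomm (a b c : E) :
    SAlg.add a (SAlg.add b c) = SAlg.add b (SAlg.add a c) := by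
  rw [SAlg.add_assoc, SAlg.add_comm a b, ← SAlg.add_assoc]

lemma SAlg.zero_add_s15 (a : E) : SAlg.add SAlg.zero a = a := by
  rw [SAlg.add_comm, SAlg.add_zero]

lemma SAlg.one_add (a : E) : SAlg.add SAlg.one a = SAlg.one := by
  rw [SAlg.add_comm, SAlg.add_one]

lemma SAlg.foldr_erase [DecidableEq E] {l : List E} {b : E} (h : b ∈ l) :
    l.foldr SAlg.add SAlg.zero
      = SAlg.add b ((l.erase b).foldr SAlg.add SAlg.zero) := by
  induction l with
  | nil => cases h
  | cons c t ih =>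
    by_cases hcb : c = b
    · subst hcb; simp [List.erase_cons_head]
    · rw [List.erase_cons_tail (by simpa using hcb)]
      have hb : b ∈ t := by
        rcases List.mem_cons.mp h with h' | h'
        · exact absurd h'.symm hcb
        · exact h'
      simp only [List.foldr_cons]
      rw [ih hb, SAlg.add_lcomm]

lemma SAlg.foldr_of_count [DecidableEq E] :
    ∀ (n : ℕ) (l : List E) (a : E), n ≤ l.count a →
      ∃ y, l.foldr SAlg.add SAlg.zero = SAlg.add (nadd n a) y := by
  intro n
  induction n with
  | zero =>
    intro l a _
    exact ⟨l.foldr SAlg.add SAlg.zero, (SAlg.zero_add_s15 _).symm⟩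
  | succ n ih =>
    intro l a hn
    have hal : a ∈ l := List.count_pos_iff.mp (Nat.lt_of_lt_of_le (Nat.succ_pos n) hn)
    have hcount : n ≤ (l.erase a).count a := by
      rw [List.count_erase_self]
      omega
    obtain ⟨y, hy⟩ := ih (l.erase a) a hcount
    refine ⟨y, ?_⟩
    rw [SAlg.foldr_erase hal, hy, SAlg.add_assoc]
    rfl

lemma SAlg.finite_bounded {R : Set E} (hR : R.Finite) :
    ∀ K : ℕ, {x : E | ∃ l : List E, (∀ a ∈ l, a ∈ R) ∧ l.length ≤ K ∧
      x = l.foldr SAlg.add SAlg.zero}.Finite := by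
  intro K
  induction K with
  | zero =>
    apply Set.Finite.subset (Set.finite_singleton (SAlg.zero : E))
    rintro x ⟨l, -, hlen, rfl⟩
    have : l = [] := List.length_eq_zero_iff.mp (Nat.le_zero.mp hlen)
    simp [this]
  | succ K ih =>
    apply Set.Finite.subset (ih.union (hR.biUnion (fun a _ => ih.image (SAlg.add a))))
    rintro x ⟨l, hmem, hlen, rfl⟩
    cases l with
    | nil =>
      left
      exact ⟨[], by simp, by simp, rfl⟩
    | cons a t =>
      right
      refine Set.mem_biUnion (hmem a (List.mem_cons_self (a := a) (l := t))) ?_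
      refine ⟨t.foldr SAlg.add SAlg.zero,
        ⟨t, fun b hb => hmem b (List.mem_cons_of_mem _ hb), ?_, rfl⟩, rfl⟩
      simpa [Nat.succ_le_succ_iff] using hlen

end Aux

/-- In a locally finite QMV algebra, the ⊞-closure of a finite subset
(together with 0) is finite. -/
theorem locally_finite_boxplus_closure_finite {E : Type*} [QMV E]
    (hlf : ∀ a : E, a ≠ SAlg.zero → ∃ n : ℕ, nadd n a = SAlg.one)
    (R : Set E) (hR : R.Finite) :
    Set.Finite {x : E | ∃ l : List E, (∀ a ∈ l, a ∈ R) ∧ x = l.foldr SAlg.add SAlg.zero} := by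
  classical
  set N : E → ℕ := fun a => if h : a = SAlg.zero then 0 else (hlf a h).choose with hN
  set F : Finset E := hR.toFinset with hF
  set K : ℕ := ∑ a ∈ F, N a with hK
  set T : Set E := {x : E | ∃ l : List E, (∀ a ∈ l, a ∈ R) ∧ l.length ≤ K ∧
      x = l.foldr SAlg.add SAlg.zero} ∪ {SAlg.one} with hT
  have hTfin : T.Finite := (SAlg.finite_bounded hR K).union (Set.finite_singleton _)
  apply hTfin.subset
  rintro x ⟨l, hmem, rfl⟩
  -- key claim by strong induction on length
  have key : ∀ (n : ℕ) (l : List E), l.length ≤ n → (∀ a ∈ l, a ∈ R) →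
      l.foldr SAlg.add SAlg.zero ∈ T := by
    intro n
    induction n with
    | zero =>
      intro l hlen hmem
      left
      exact ⟨l, hmem, Nat.le_trans hlen (Nat.zero_le K), rfl⟩
    | succ n ih =>
      intro l hlen hmem
      by_cases hlK : l.length ≤ K
      · left; exact ⟨l, hmem, hlK, rfl⟩
      · -- pigeonhole: some a in F has count > N a
        have hsub : l.toFinset ⊆ F := by
          intro a ha
          rw [hF, Set.Finite.mem_toFinset]
          exact hmem a (List.mem_toFinset.mp ha)
        have hlensum : l.length = ∑ a ∈ l.toFinset, l.count a := by
          simpa using (Multiset.toFinset_sum_count_eq (l : Multiset E)).symm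
        have hlenle : l.length ≤ ∑ a ∈ F, l.count a := by
          rw [hlensum]
          exact Finset.sum_le_sum_of_subset_of_nonneg hsub
            (fun _ _ _ => Nat.zero_le _)
        have hpigeon : ∃ a ∈ F, N a < l.count a := by
          by_contra hcon
          push_neg at hcon
          have : ∑ a ∈ F, l.count a ≤ ∑ a ∈ F, N a :=
            Finset.sum_le_sum (fun a ha => hcon a ha)
          omega
        obtain ⟨a, -, hac⟩ := hpigeon
        by_cases ha0 : a = SAlg.zero
        · -- remove a zero and recurse
          have hNa : N a = 0 := by rw [hN]; simp [ha0]
          have hal : a ∈ l := List.count_pos_iff.mp (by omega)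
          have hfold : l.foldr SAlg.add SAlg.zero
              = (l.erase a).foldr SAlg.add SAlg.zero := by
            rw [SAlg.foldr_erase hal, ha0, SAlg.zero_add_s15]
          rw [hfold]
          apply ih
          · have := List.length_erase_of_mem hal
            omega
          · exact fun b hb => hmem b (List.mem_of_mem_erase hb)
        · -- overflow: the sum is 1
          have hspec : nadd ((hlf a ha0).choose) a = SAlg.one := (hlf a ha0).choose_spec
          have hNa : N a = (hlf a ha0).choose := by rw [hN]; simp [ha0]
          obtain ⟨y, hy⟩ := SAlg.foldr_of_count (N a) l a (Nat.le_of_lt hac)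
          right
          rw [hy, hNa, hspec, SAlg.one_add]
          rfl
  exact key l.length l le_rfl hmem
end
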